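/- A nonzero Banach lattice F has the positive Daugavet property if and only if for every a ≥ 0 in the unit sphere S(F), every positive continuous linear functional a* with ‖a*‖ = 1 and every ε > 0 there exists b ≥ 0 in S(F) such that a*(b) ≥ 1 − ε and ‖a + b‖ ≥ 2 − ε. -/

import Mathlib

section Aux

variable {F : Type*} [NormedAddCommGroup F] [Lattice F] [IsOrderedAddMonoid F] [HasSolidNorm F] [NormedSpace ℝ F]

/-- In a lattice ordered group, `0 ≤ z + z` implies `0 ≤ z`. -/
private lemma nonneg_of_add_self_nonneg {z : F} (h : 0 ≤ z + z) : 0 ≤ z := by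
  have h1 : -z ≤ z := by
    rw [neg_le_iff_add_nonneg]; exact h
  have habs : |z| = z ⊔ -z := rfl
  have h2 : |z| = z := by rw [habs, sup_eq_left.2 h1]
  rw [← h2]; exact abs_nonneg z

/-- Powers of `1/2` preserve positivity. -/
private lemma inv_two_pow_smul_nonneg {a : F} (ha : 0 ≤ a) (k : ℕ) :
    0 ≤ (((2 : ℝ) ^ k)⁻¹) • a := by
  induction k with
  | zero => simpa using ha
  | succ k ih =>
      apply nonneg_of_add_self_nonneg
      have : (((2 : ℝ) ^ (k + 1))⁻¹) • a + (((2 : ℝ) ^ (k + 1))⁻¹) • a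
          = (((2 : ℝ) ^ k)⁻¹) • a := by
        rw [← add_smul]
        congr 1
        rw [pow_succ]
        field_simp
        ring
      rw [this]; exact ih

private lemma dyadic_smul_nonneg {a : F} (ha : 0 ≤ a) (m k : ℕ) :
    0 ≤ ((m : ℝ) / 2 ^ k) • a := by
  have : ((m : ℝ) / 2 ^ k) • a = m • ((((2 : ℝ) ^ k)⁻¹) • a) := by
    rw [← Nat.cast_smul_eq_nsmul ℝ, smul_smul, div_eq_mul_inv]
  rw [this]
  exact nsmul_nonneg (inv_two_pow_smul_nonneg ha k) m

/-- In a normed lattice which is a normed real vector space, nonnegative scalar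
multiples of nonnegative vectors are nonnegative. -/
lemma real_smul_nonneg {c : ℝ} (hc : 0 ≤ c) {a : F} (ha : 0 ≤ a) : 0 ≤ c • a := by
  -- approximate `c` by dyadic rationals
  set u : ℕ → ℝ := fun k => (⌊c * 2 ^ k⌋₊ : ℝ) / 2 ^ k with hu
  have hud : ∀ k, |u k - c| ≤ ((2 : ℝ) ^ k)⁻¹ := by
    intro k
    have h2k : (0 : ℝ) < 2 ^ k := by positivity
    have h1 : (⌊c * 2 ^ k⌋₊ : ℝ) ≤ c * 2 ^ k := Nat.floor_le (by positivity)
    have h2 : c * 2 ^ k - 1 < (⌊c * 2 ^ k⌋₊ : ℝ) := by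
      have := Nat.lt_floor_add_one (c * 2 ^ k)
      linarith
    have e1 : u k = (⌊c * 2 ^ k⌋₊ : ℝ) / 2 ^ k := rfl
    have l1 : c - ((2 : ℝ) ^ k)⁻¹ < u k := by
      rw [e1, lt_div_iff₀ h2k]
      have e2 : (c - ((2 : ℝ) ^ k)⁻¹) * 2 ^ k = c * 2 ^ k - 1 := by
        field_simp
      rw [e2]; exact h2
    have l2 : u k ≤ c := by
      rw [e1, div_le_iff₀ h2k]; exact h1
    have hinv : (0 : ℝ) ≤ ((2 : ℝ) ^ k)⁻¹ := by positivity
    rw [abs_le]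
    constructor <;> linarith
  have hulim : Filter.Tendsto u Filter.atTop (nhds c) := by
    rw [tendsto_iff_dist_tendsto_zero]
    have hbound : ∀ k : ℕ, dist (u k) c ≤ ((2 : ℝ)⁻¹) ^ k := by
      intro k
      rw [Real.dist_eq, inv_pow]
      exact hud k
    exact squeeze_zero (fun k => dist_nonneg) hbound
      (tendsto_pow_atTop_nhds_zero_of_lt_one (by norm_num) (by norm_num))
  have hlim : Filter.Tendsto (fun k => u k • a) Filter.atTop (nhds (c • a)) :=
    hulim.smul_const a
  have hnn : ∀ k, 0 ≤ u k • a := fun k => dyadic_smul_nonneg ha _ k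
  exact le_of_tendsto_of_tendsto tendsto_const_nhds hlim
    (Filter.Eventually.of_forall hnn)

end Aux

set_option maxHeartbeats 1000000 in
/-- A nonzero Banach lattice `F` has the *positive Daugavet property* (every positive
rank-one operator `z ↦ f z • a` satisfies `‖Id + T‖ = 1 + ‖T‖`) iff for every positive
`a` in the unit sphere, every positive norm-one functional `f` and every `ε > 0` there
is a positive `b` in the unit sphere with `f b ≥ 1 - ε` and `‖a + b‖ ≥ 2 - ε`. -/
theorem positiveDaugavetProperty_iff_sphere_criterion
    {F : Type*} [NormedAddCommGroup F] [Lattice F] [IsOrderedAddMonoid F] [HasSolidNorm F] [NormedSpace ℝ F] [CompleteSpace F]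
    [Nontrivial F] :
    (∀ (f : F →L[ℝ] ℝ) (a : F), 0 ≤ a → a ≠ 0 → f ≠ 0 → (∀ z : F, 0 ≤ z → 0 ≤ f z) →
        ‖ContinuousLinearMap.id ℝ F + f.smulRight a‖ = 1 + ‖f.smulRight a‖) ↔
    (∀ a : F, 0 ≤ a → ‖a‖ = 1 → ∀ f : F →L[ℝ] ℝ, (∀ z : F, 0 ≤ z → 0 ≤ f z) → ‖f‖ = 1 →
        ∀ ε : ℝ, 0 < ε →
        ∃ b : F, 0 ≤ b ∧ ‖b‖ = 1 ∧ 1 - ε ≤ f b ∧ 2 - ε ≤ ‖a + b‖) := by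
  constructor
  · -- Daugavet property ⟹ sphere criterion
    intro H a ha hna f hf hnf ε hε
    set δ : ℝ := min ε (1/2) with hδdef
    have hδpos : 0 < δ := lt_min hε (by norm_num)
    have hδε : δ ≤ ε := min_le_left _ _
    have hδhalf : δ ≤ 1/2 := min_le_right _ _
    have ha0 : a ≠ 0 := by intro h; rw [h, norm_zero] at hna; norm_num at hna
    have hf0 : f ≠ 0 := by intro h; rw [h] at hnf; simp at hnf
    have hT : ‖f.smulRight a‖ = 1 := by
      rw [ContinuousLinearMap.norm_smulRight_apply, hnf, hna, one_mul]
    have hnorm : (2 : ℝ) - δ < ‖ContinuousLinearMap.id ℝ F + f.smulRight a‖ := by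
      rw [H f a ha ha0 hf0 hf, hT]; linarith
    obtain ⟨x, hx1, hx2⟩ :=
      ContinuousLinearMap.exists_lt_apply_of_lt_opNorm _ hnorm
    have happ : ∀ z : F, (ContinuousLinearMap.id ℝ F + f.smulRight a) z
        = z + f z • a := by
      intro z; simp
    -- choose the sign of x so that f x ≥ 0
    obtain ⟨y, hy1, hfy0, hy2⟩ :
        ∃ y : F, ‖y‖ < 1 ∧ 0 ≤ f y ∧ 2 - δ < ‖y + f y • a‖ := by
      rcases le_or_gt 0 (f x) with h | h
      · exact ⟨x, hx1, h, by rw [← happ]; exact hx2⟩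
      · refine ⟨-x, by simpa using hx1, by rw [map_neg]; linarith, ?_⟩
        rw [map_neg, neg_smul, ← neg_add, norm_neg, ← happ]
        exact hx2
    have hfy1 : f y ≤ ‖y‖ := by
      calc f y ≤ |f y| := le_abs_self _
        _ = ‖f y‖ := (Real.norm_eq_abs _).symm
        _ ≤ ‖f‖ * ‖y‖ := f.le_opNorm y
        _ = ‖y‖ := by rw [hnf, one_mul]
    have key : 2 - δ < ‖y‖ + f y := by
      have : ‖y + f y • a‖ ≤ ‖y‖ + f y := by
        calc ‖y + f y • a‖ ≤ ‖y‖ + ‖f y • a‖ := norm_add_le _ _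
          _ = ‖y‖ + |f y| * ‖a‖ := by rw [norm_smul, Real.norm_eq_abs]
          _ = ‖y‖ + f y := by rw [hna, mul_one, abs_of_nonneg hfy0]
      linarith
    have hfylb : 1 - δ < f y := by linarith
    have hylb : 1 - δ < ‖y‖ := by linarith [hfy1.trans_lt hy1]
    have hypos : 0 < ‖y‖ := by linarith
    have hy0 : y ≠ 0 := by
      intro h; rw [h, norm_zero] at hypos; exact lt_irrefl _ hypos
    -- the candidate: normalized |y|
    set b : F := ‖y‖⁻¹ • |y| with hb
    have habsy : (0 : F) ≤ |y| := abs_nonneg y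
    have hb0 : 0 ≤ b := real_smul_nonneg (inv_nonneg.2 hypos.le) habsy
    have hnb : ‖b‖ = 1 := by
      rw [hb, norm_smul, Real.norm_eq_abs, abs_of_nonneg (inv_nonneg.2 hypos.le),
        norm_abs_eq_norm, inv_mul_cancel₀ (ne_of_gt hypos)]
    have hfiy : f y ≤ f |y| := by
      have h1 : (0 : F) ≤ |y| - y := sub_nonneg.2 (le_abs_self y)
      have := hf _ h1
      rw [map_sub] at this
      linarith
    have hinv1 : 1 ≤ ‖y‖⁻¹ := (one_le_inv₀ hypos).2 hy1.le
    have hfb : 1 - ε ≤ f b := by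
      have h1 : f b = ‖y‖⁻¹ * f |y| := by rw [hb, map_smul, smul_eq_mul]
      have h2 : 0 ≤ f |y| := hf _ habsy
      have h3 : f |y| ≤ ‖y‖⁻¹ * f |y| := le_mul_of_one_le_left h2 hinv1
      have : 1 - δ ≤ f b := by rw [h1]; linarith
      linarith
    have hsmul_le : f y • a ≤ a := by
      have h1 : (0 : F) ≤ (1 - f y) • a :=
        real_smul_nonneg (by linarith [hfy1.trans_lt hy1]) ha
      have h2 : (1 - f y) • a = a - f y • a := by rw [sub_smul, one_smul]
      rw [h2] at h1
      exact sub_nonneg.1 h1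
    have habs_le : |y + f y • a| ≤ |y| + a := by
      calc |y + f y • a| ≤ |y| + |f y • a| := abs_add_le _ _
        _ = |y| + f y • a := by
            rw [abs_of_nonneg (real_smul_nonneg hfy0 ha)]
        _ ≤ |y| + a := add_le_add_right hsmul_le _
    have hnorm1 : ‖y + f y • a‖ ≤ ‖|y| + a‖ := by
      apply norm_le_norm_of_abs_le_abs
      rwa [abs_of_nonneg (add_nonneg habsy ha)]
    have hab_le : |y| + a ≤ b + a := by
      have h1 : (0 : F) ≤ (‖y‖⁻¹ - 1) • |y| :=
        real_smul_nonneg (by linarith) habsy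
      have h2 : (‖y‖⁻¹ - 1) • |y| = b - |y| := by
        rw [sub_smul, one_smul, hb]
      rw [h2] at h1
      exact add_le_add_left (sub_nonneg.1 h1) a
    have hnorm2 : ‖|y| + a‖ ≤ ‖b + a‖ := by
      apply norm_le_norm_of_abs_le_abs
      rw [abs_of_nonneg (add_nonneg habsy ha), abs_of_nonneg (add_nonneg hb0 ha)]
      exact hab_le
    refine ⟨b, hb0, hnb, hfb, ?_⟩
    have : 2 - δ < ‖b + a‖ := lt_of_lt_of_le hy2 (hnorm1.trans hnorm2)
    rw [add_comm a b]
    linarith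
  · -- sphere criterion ⟹ Daugavet property
    intro H f a ha ha0 hf0 hf
    set T := f.smulRight a with hTdef
    have hTnorm : ‖T‖ = ‖f‖ * ‖a‖ := ContinuousLinearMap.norm_smulRight_apply f a
    have hfpos : 0 < ‖f‖ := norm_pos_iff.2 hf0
    have hapos : 0 < ‖a‖ := norm_pos_iff.2 ha0
    set M : ℝ := ‖f‖ * ‖a‖ with hM
    have hMpos : 0 < M := mul_pos hfpos hapos
    clear_value M
    clear_value T
    apply le_antisymm
    · calc ‖ContinuousLinearMap.id ℝ F + T‖
          ≤ ‖ContinuousLinearMap.id ℝ F‖ + ‖T‖ := norm_add_le _ _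
        _ = 1 + ‖T‖ := by rw [ContinuousLinearMap.norm_id]
    · rw [hTnorm]
      apply le_of_forall_pos_le_add
      intro η hη
      set ε : ℝ := min (η / (1 + 2 * M)) (1/2) with hε
      have hden : (0 : ℝ) < 1 + 2 * M := by linarith
      have hεpos : 0 < ε := lt_min (div_pos hη hden) (by norm_num)
      have hεhalf : ε ≤ 1/2 := min_le_right _ _
      have hεη : ε * (1 + 2 * M) ≤ η := by
        have h1 : ε ≤ η / (1 + 2 * M) := min_le_left _ _
        rw [← le_div_iff₀ hden]
        exact h1
      clear_value ε
      -- normalize a and f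
      set a' : F := ‖a‖⁻¹ • a with ha'
      set f' : F →L[ℝ] ℝ := ‖f‖⁻¹ • f with hf'
      have ha'nn : 0 ≤ a' := real_smul_nonneg (inv_nonneg.2 hapos.le) ha
      have ha'norm : ‖a'‖ = 1 := by
        rw [ha', norm_smul, Real.norm_eq_abs, abs_of_nonneg (inv_nonneg.2 hapos.le),
          inv_mul_cancel₀ (ne_of_gt hapos)]
      clear_value a'
      have hf'pos : ∀ z : F, 0 ≤ z → 0 ≤ f' z := by
        intro z hz
        rw [hf']
        simp only [ContinuousLinearMap.coe_smul', Pi.smul_apply, smul_eq_mul]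
        exact mul_nonneg (inv_nonneg.2 hfpos.le) (hf z hz)
      have hf'norm : ‖f'‖ = 1 := by
        have h1 : ‖(‖f‖⁻¹ : ℝ) • f‖ = ‖(‖f‖⁻¹ : ℝ)‖ * ‖f‖ := by
          exact_mod_cast norm_smul (‖f‖⁻¹) f
        rw [hf', h1, Real.norm_eq_abs, abs_of_nonneg (inv_nonneg.2 hfpos.le),
          inv_mul_cancel₀ (ne_of_gt hfpos)]
      clear_value f'
      obtain ⟨b, hb0, hb1, hfb, hab⟩ := H a' ha'nn ha'norm f' hf'pos hf'norm ε hεpos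
      -- a norming functional for a' + b
      have habne : a' + b ≠ 0 := by
        intro h
        rw [h, norm_zero] at hab
        linarith
      obtain ⟨g, hg1, hg2⟩ := exists_dual_vector ℝ (a' + b) (norm_ne_zero_iff.2 habne)
      have hgle : ∀ z : F, g z ≤ ‖z‖ := by
        intro z
        calc g z ≤ |g z| := le_abs_self _
          _ = ‖g z‖ := (Real.norm_eq_abs _).symm
          _ ≤ ‖g‖ * ‖z‖ := g.le_opNorm z
          _ = ‖z‖ := by rw [hg1, one_mul]
      have hgab : g (a' + b) = ‖a' + b‖ := by
        simpa using hg2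
      have hgb : 1 - ε ≤ g b := by
        have h1 : g a' + g b = ‖a' + b‖ := by rw [← map_add, hgab]
        have h2 : g a' ≤ 1 := by rw [← ha'norm]; exact hgle a'
        linarith
      have hga' : 1 - ε ≤ g a' := by
        have h1 : g a' + g b = ‖a' + b‖ := by rw [← map_add, hgab]
        have h2 : g b ≤ 1 := by rw [← hb1]; exact hgle b
        linarith
      -- translate back to f and a
      have hfb' : ‖f‖ * (1 - ε) ≤ f b := by
        have h1 : f' b = ‖f‖⁻¹ * f b := by
          rw [hf']
          simp only [ContinuousLinearMap.coe_smul', Pi.smul_apply, smul_eq_mul]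
        have h2 : f b = ‖f‖ * f' b := by
          rw [h1, ← mul_assoc, mul_inv_cancel₀ (ne_of_gt hfpos), one_mul]
        rw [h2]
        exact mul_le_mul_of_nonneg_left hfb hfpos.le
      have hfbnn : 0 ≤ f b := hf b hb0
      have hga : ‖a‖ * (1 - ε) ≤ g a := by
        have h1 : a = ‖a‖ • a' := by
          rw [ha', smul_smul, mul_inv_cancel₀ (ne_of_gt hapos), one_smul]
        have h2 : g a = ‖a‖ * g a' := by
          conv_lhs => rw [h1]
          rw [map_smul, smul_eq_mul]
        rw [h2]
        exact mul_le_mul_of_nonneg_left hga' hapos.le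
      have hεlt1 : ε < 1 := by linarith
      -- the main estimate
      have hmain : 1 + M - η ≤ ‖(ContinuousLinearMap.id ℝ F + T) b‖ := by
        have happ : (ContinuousLinearMap.id ℝ F + T) b = b + f b • a := by
          rw [hTdef]; simp
        rw [happ]
        have h1 : g (b + f b • a) ≤ ‖b + f b • a‖ := hgle _
        have h2 : g (b + f b • a) = g b + f b * g a := by
          rw [map_add, map_smul, smul_eq_mul]
        have h3 : (‖f‖ * (1 - ε)) * (‖a‖ * (1 - ε)) ≤ f b * g a := by
          apply mul_le_mul hfb' hga (mul_nonneg hapos.le (by linarith)) hfbnn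
        have h4 : M * (1 - ε) * (1 - ε) ≤ f b * g a := by
          have he : M * (1 - ε) * (1 - ε) = (‖f‖ * (1 - ε)) * (‖a‖ * (1 - ε)) := by
            rw [hM]; ring
          rw [he]; exact h3
        have h5 : 1 + M - η ≤ (1 - ε) + M * (1 - ε) * (1 - ε) := by
          nlinarith [hMpos.le, hεpos.le, hεη,
            mul_nonneg (mul_nonneg hεpos.le hεpos.le) hMpos.le]
        linarith [hgb]
      have hfinal : ‖(ContinuousLinearMap.id ℝ F + T) b‖
          ≤ ‖ContinuousLinearMap.id ℝ F + T‖ := by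
        calc ‖(ContinuousLinearMap.id ℝ F + T) b‖
            ≤ ‖ContinuousLinearMap.id ℝ F + T‖ * ‖b‖ :=
              (ContinuousLinearMap.id ℝ F + T).le_opNorm b
          _ = ‖ContinuousLinearMap.id ℝ F + T‖ := by rw [hb1, mul_one]
      linarith
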